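/- Define x_d := 1 + 1/2 + ... + 1/d for d ∈ ℕ, and let g : (1,∞) → ℝ be given by g(x) = (x - x_d)/(d+1) for x_d < x ≤ x_{d+1}. Then ∫₁^∞ x² g(x) dx < ∞ while ∫₁^∞ (g'(x)/g(x) · x)² g(x) dx = ∞ (where g' is taken on the interior of each interval (x_d, x_{d+1})). -/

import Mathlib

open MeasureTheory Set Filter
open scoped ENNReal

lemma harm_le_aux (n : ℕ) (hn : 1 ≤ n) :
    (∑ i ∈ Finset.range n, (1 : ℝ) / (i + 1)) ≤ 3 * Real.sqrt n := by
  have h1 : (∑ i ∈ Finset.range n, (1 : ℝ) / (i + 1)) = ((harmonic n : ℚ) : ℝ) := by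
    rw [harmonic]
    push_cast
    simp [one_div]
  have h2 := harmonic_le_one_add_log n
  have hn1 : (1:ℝ) ≤ n := by exact_mod_cast hn
  have hs : (1:ℝ) ≤ Real.sqrt n := by
    rw [show (1:ℝ) = Real.sqrt 1 by simp]
    exact Real.sqrt_le_sqrt hn1
  have hlog : Real.log n ≤ 2 * Real.sqrt n - 2 := by
    have h3 := Real.log_le_sub_one_of_pos (show (0:ℝ) < Real.sqrt n by linarith)
    have hls : Real.log (Real.sqrt n) = Real.log n / 2 := Real.log_sqrt (by linarith)
    rw [hls] at h3
    linarith
  rw [h1]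
  linarith

/-- With `x_d` the `d`-th harmonic number and `g(x) = (x - x_d)/(d+1)` on
`(x_d, x_{d+1}]`, the integral `∫₁^∞ x² g(x) dx` is finite while
`∫₁^∞ (g'(x)/g(x)·x)² g(x) dx` is infinite. -/
theorem stmt_8 (H : ℕ → ℝ)
    (hH : ∀ d : ℕ, H d = ∑ i ∈ Finset.range d, (1 : ℝ) / (i + 1))
    (g : ℝ → ℝ)
    (hg : ∀ d : ℕ, 1 ≤ d → ∀ x ∈ Ioc (H d) (H (d + 1)), g x = (x - H d) / (d + 1)) :
    (∫⁻ x in Ioi (1:ℝ), ENNReal.ofReal (x ^ 2 * g x)) < ⊤ ∧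
    (∫⁻ x in Ioi (1:ℝ), ENNReal.ofReal ((deriv g x / g x * x) ^ 2 * g x)) = ⊤ := by
  classical
  have hstep : ∀ d : ℕ, H (d + 1) = H d + 1 / ((d : ℝ) + 1) := by
    intro d
    rw [hH, hH, Finset.sum_range_succ]
  have hmono : StrictMono H := strictMono_nat_of_lt_succ (by
    intro n
    rw [hstep]
    have : (0:ℝ) < 1 / ((n:ℝ) + 1) := by positivity
    linarith)
  have hH1 : H 1 = 1 := by rw [hH]; norm_num
  have hHge1 : ∀ d : ℕ, 1 ≤ d → 1 ≤ H d := fun d hd => hH1 ▸ hmono.monotone hd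
  have hstep2 : ∀ d : ℕ, H (d + 2) = H (d + 1) + 1 / ((d : ℝ) + 2) := by
    intro d
    have h := hstep (d + 1)
    have e : d + 1 + 1 = d + 2 := rfl
    rw [e] at h
    push_cast at h
    rw [h]
    ring
  have hHbound : ∀ d : ℕ, 1 ≤ d → H d ≤ 3 * Real.sqrt d := fun d hd =>
    (hH d) ▸ harm_le_aux d hd
  constructor
  · -- finiteness
    have htop : Tendsto H atTop atTop := by
      have heq : H = fun n => ∑ i ∈ Finset.range n, (1 / (i + 1) : ℝ) := by
        funext n; rw [hH n]
      rw [heq]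
      exact Real.tendsto_sum_range_one_div_nat_succ_atTop
    set S : ℕ → Set ℝ := fun n => Ioc (H (n+1)) (H (n+2)) with hS
    have hSm : ∀ n, MeasurableSet (S n) := fun n => measurableSet_Ioc
    have key : ∀ i j : ℕ, i < j → Disjoint (S i) (S j) := by
      intro i j h
      apply Set.Ioc_disjoint_Ioc.2
      have h2 : H (i+2) ≤ H (j+1) := hmono.monotone (by omega)
      calc min (H (i+2)) (H (j+2)) ≤ H (i+2) := min_le_left _ _
        _ ≤ H (j+1) := h2
        _ ≤ max (H (i+1)) (H (j+1)) := le_max_right _ _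
    have hSd : Pairwise (Function.onFun Disjoint S) := by
      intro i j hij
      rcases hij.lt_or_gt with h | h
      · exact key i j h
      · exact (key j i h).symm
    have hunion : ⋃ n, S n = Ioi (1:ℝ) := by
      apply Subset.antisymm
      · refine iUnion_subset fun n x hx => ?_
        have h1 : 1 ≤ H (n+1) := hHge1 _ (by omega)
        exact lt_of_le_of_lt h1 hx.1
      · intro x hx
        have hx1 : (1:ℝ) < x := hx
        have hex : ∃ d, x ≤ H d := (htop.eventually_ge_atTop x).exists
        set m := Nat.find hex with hmdef
        have hm : x ≤ H m := Nat.find_spec hex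
        have hlt : ∀ k, k < m → ¬ x ≤ H k := fun k hk => Nat.find_min hex hk
        have hm2 : 2 ≤ m := by
          by_contra hcon
          push_neg at hcon
          have h3 : H m ≤ H 1 := hmono.monotone (by omega)
          rw [hH1] at h3
          linarith
        obtain ⟨k, hk⟩ : ∃ k, m = k + 2 := ⟨m - 2, by omega⟩
        refine mem_iUnion.2 ⟨k, ?_, ?_⟩
        · have h4 := hlt (k+1) (by omega)
          push_neg at h4
          exact h4
        · rw [show k + 1 + 1 = k + 2 from rfl, ← hk]
          exact hm
    rw [← hunion, lintegral_iUnion hSm hSd]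
    have hterm : ∀ n : ℕ, (∫⁻ x in S n, ENNReal.ofReal (x ^ 2 * g x)) ≤
        ENNReal.ofReal (9 / ((n:ℝ) + 2) ^ 2) := by
      intro n
      have hd2 : (0:ℝ) < (n:ℝ) + 2 := by positivity
      have hmeasS : volume (S n) = ENNReal.ofReal (1 / ((n:ℝ) + 2)) := by
        rw [hS]
        simp only
        rw [Real.volume_Ioc]
        congr 1
        have := hstep2 n
        linarith
      calc ∫⁻ x in S n, ENNReal.ofReal (x ^ 2 * g x)
          ≤ ∫⁻ _ in S n, ENNReal.ofReal (9 / ((n:ℝ) + 2)) := by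
            apply setLIntegral_mono' (hSm n)
            intro x hx
            apply ENNReal.ofReal_le_ofReal
            obtain ⟨hx1, hx2⟩ := hx
            have hgx : g x = (x - H (n+1)) / ((n:ℝ) + 2) := by
              have h5 := hg (n+1) (by omega) x ⟨hx1, hx2⟩
              rw [h5]
              push_cast
              ring_nf
            have hxpos : (1:ℝ) < x := lt_of_le_of_lt (hHge1 (n+1) (by omega)) hx1
            have hxle : x ≤ 3 * Real.sqrt ((n:ℝ) + 2) := by
              have h6 := hHbound (n+2) (by omega)
              push_cast at h6
              linarith
            have hxsq : x ^ 2 ≤ 9 * ((n:ℝ) + 2) := by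
              have h7 : x ^ 2 ≤ (3 * Real.sqrt ((n:ℝ) + 2)) ^ 2 :=
                pow_le_pow_left₀ (by linarith) hxle 2
              have h8 : (3 * Real.sqrt ((n:ℝ) + 2)) ^ 2 = 9 * ((n:ℝ) + 2) := by
                rw [mul_pow, Real.sq_sqrt (by positivity)]
                norm_num
              linarith
            have hxd : x - H (n+1) ≤ 1 / ((n:ℝ) + 2) := by
              have h9 := hstep2 n
              linarith
            have hgle : g x ≤ 1 / ((n:ℝ) + 2) ^ 2 := by
              rw [hgx]
              calc (x - H (n+1)) / ((n:ℝ) + 2) ≤ (1 / ((n:ℝ)+2)) / ((n:ℝ)+2) := by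
                    gcongr
                _ = 1 / ((n:ℝ)+2)^2 := by rw [div_div, ← sq]
            have hgnn : 0 ≤ g x := by
              rw [hgx]
              have : 0 ≤ x - H (n+1) := by linarith
              positivity
            calc x ^ 2 * g x ≤ (9 * ((n:ℝ) + 2)) * (1 / ((n:ℝ) + 2) ^ 2) := by
                  apply mul_le_mul hxsq hgle hgnn (by positivity)
              _ = 9 / ((n:ℝ) + 2) := by
                  have hne : ((n:ℝ) + 2) ≠ 0 := ne_of_gt hd2
                  rw [eq_div_iff hne, one_div, ← inv_pow]
                  have : ((n:ℝ) + 2) * (((n:ℝ) + 2)⁻¹) = 1 := mul_inv_cancel₀ hne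
                  nlinarith [this]
        _ = ENNReal.ofReal (9 / ((n:ℝ) + 2)) * volume (S n) := setLIntegral_const _ _
        _ = ENNReal.ofReal (9 / ((n:ℝ) + 2) ^ 2) := by
            rw [hmeasS, ← ENNReal.ofReal_mul (by positivity)]
            congr 1
            field_simp
    have hsum : Summable (fun n : ℕ => 9 / ((n:ℝ) + 2) ^ 2) := by
      have h0 : Summable (fun n : ℕ => 9 * (1 / (n:ℝ) ^ 2)) :=
        (Real.summable_one_div_nat_pow.2 one_lt_two).mul_left 9
      have h1 := (summable_nat_add_iff 2).2 h0
      refine h1.congr fun n => ?_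
      push_cast
      ring
    calc ∑' n, ∫⁻ x in S n, ENNReal.ofReal (x ^ 2 * g x)
        ≤ ∑' n : ℕ, ENNReal.ofReal (9 / ((n:ℝ) + 2) ^ 2) := ENNReal.tsum_le_tsum hterm
      _ = ENNReal.ofReal (∑' n : ℕ, 9 / ((n:ℝ) + 2) ^ 2) :=
          (ENNReal.ofReal_tsum_of_nonneg (fun n => by positivity) hsum).symm
      _ < ⊤ := ENNReal.ofReal_lt_top
  · -- divergence
    have hH2 : H 2 = 3 / 2 := by rw [hH]; norm_num
    have hgx : ∀ y ∈ Ioo (1:ℝ) (3/2), g y = (y - 1) / 2 := by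
      intro y hy
      have h1 := hg 1 le_rfl y ⟨by rw [hH1]; exact hy.1, by rw [hH2]; exact le_of_lt hy.2⟩
      rw [h1, hH1]
      norm_num
    have hdiv : ∫⁻ x in Ioo (1:ℝ) (3/2), ENNReal.ofReal ((2 * (x - 1))⁻¹) = ⊤ := by
      by_contra h
      have hlt : ∫⁻ x in Ioo (1:ℝ) (3/2), ENNReal.ofReal ((2 * (x - 1))⁻¹) < ⊤ :=
        lt_top_iff_ne_top.2 h
      have hmeas : Measurable (fun x : ℝ => (2 * (x - 1))⁻¹) :=
        ((measurable_id.sub_const 1).const_mul 2).inv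
      have hint : IntegrableOn (fun x : ℝ => (2 * (x - 1))⁻¹) (Ioo (1:ℝ) (3/2)) := by
        refine ⟨hmeas.aestronglyMeasurable, ?_⟩
        refine (hasFiniteIntegral_iff_ofReal ?_).2 hlt
        filter_upwards [ae_restrict_mem measurableSet_Ioo] with x hx
        have h2 : (0:ℝ) < x - 1 := by linarith [hx.1]
        positivity
      have hpre : (fun x : ℝ => x + 1) ⁻¹' (Ioo (1:ℝ) (3/2)) = Ioo (0:ℝ) (1/2) := by
        ext y
        simp only [mem_preimage, mem_Ioo]
        constructor <;> rintro ⟨a, b⟩ <;> constructor <;> linarith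
      have hint2 : IntegrableOn (fun x : ℝ => (2 * x)⁻¹) (Ioo (0:ℝ) (1/2)) := by
        have hcomp := (measurePreserving_add_right volume (1:ℝ)).integrableOn_comp_preimage
          (measurableEmbedding_addRight 1)
          (f := fun x : ℝ => (2 * (x - 1))⁻¹) (s := Ioo (1:ℝ) (3/2)) |>.2 hint
        rw [hpre] at hcomp
        have heq : ((fun x : ℝ => (2 * (x - 1))⁻¹) ∘ fun x : ℝ => x + 1) =
            fun x : ℝ => (2 * x)⁻¹ := by
          funext x
          simp [Function.comp]
        rwa [heq] at hcomp
      have hint3 : IntegrableOn (fun x : ℝ => x ^ (-1:ℝ)) (Ioo (0:ℝ) (1/2)) := by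
        have h3 : IntegrableOn (fun x : ℝ => 2 * (2 * x)⁻¹) (Ioo (0:ℝ) (1/2)) :=
          hint2.const_mul 2
        refine IntegrableOn.congr_fun h3 (fun x hx => ?_) measurableSet_Ioo
        have hx0 : x ≠ 0 := ne_of_gt hx.1
        rw [Real.rpow_neg_one]
        field_simp
      have := (intervalIntegral.integrableOn_Ioo_rpow_iff (by norm_num : (0:ℝ) < 1/2)).1 hint3
      norm_num at this
    rw [eq_top_iff]
    calc (⊤:ℝ≥0∞) = ∫⁻ x in Ioo (1:ℝ) (3/2), ENNReal.ofReal ((2 * (x - 1))⁻¹) := hdiv.symm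
      _ = ∫⁻ x in Ioi (1:ℝ),
            (Ioo (1:ℝ) (3/2)).indicator (fun x => ENNReal.ofReal ((2 * (x - 1))⁻¹)) x := by
          rw [lintegral_indicator measurableSet_Ioo,
            Measure.restrict_restrict measurableSet_Ioo,
            Set.inter_eq_self_of_subset_left (fun x hx => hx.1)]
      _ ≤ ∫⁻ x in Ioi (1:ℝ), ENNReal.ofReal ((deriv g x / g x * x) ^ 2 * g x) := by
          apply lintegral_mono
          intro x
          by_cases hx : x ∈ Ioo (1:ℝ) (3/2)
          · rw [indicator_of_mem hx]
            show ENNReal.ofReal (2 * (x - 1))⁻¹ ≤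
              ENNReal.ofReal ((deriv g x / g x * x) ^ 2 * g x)
            have hder : deriv g x = 1 / 2 := by
              have hev : g =ᶠ[nhds x] fun y => (y - 1) / 2 :=
                Filter.eventuallyEq_of_mem (isOpen_Ioo.mem_nhds hx) hgx
              rw [hev.deriv_eq]
              simpa using (((hasDerivAt_id x).sub_const 1).div_const 2).deriv
            rw [hder, hgx x hx]
            apply ENNReal.ofReal_le_ofReal
            obtain ⟨h1, h2⟩ := hx
            have ht : (0:ℝ) < x - 1 := by linarith
            have hq : (1:ℝ) / 2 / ((x - 1) / 2) * x = x / (x - 1) := by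
              field_simp
            rw [hq, div_pow]
            have hform : x ^ 2 / (x - 1) ^ 2 * ((x - 1) / 2) = x ^ 2 / (2 * (x - 1)) := by
              field_simp
            rw [hform, inv_eq_one_div]
            have hx2 : (1:ℝ) ≤ x ^ 2 := by nlinarith
            gcongr
          · rw [indicator_of_notMem hx]
            exact zero_le
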